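/- Fix α < ω₁ and consider the tree Tree(S_α) = (S_α, ⊆) of Schreier sets ordered by inclusion. The order of Tree(S_α) is ω^α + 1. -/

import Mathlib

/-- The first uncountable ordinal `ω₁`. -/
noncomputable def omega1 : Ordinal := (Cardinal.aleph 1).ord

/-- `S, A` form a Schreier system: `S α` is the Schreier family of finite subsets
of `ℕ` (defined by the usual transfinite recursion, where at each countable limit
ordinal `α` the fixed increasing sequence `A α : ℕ → Ordinal` converging to `α`
is used). -/
def SchreierSystem (S : Ordinal → Set (Finset ℕ)) (A : Ordinal → ℕ → Ordinal) : Prop :=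
  (S 0 = {F | ∃ n : ℕ, 1 ≤ n ∧ F = {n}} ∪ {∅}) ∧
  (S 1 = {F | ∀ n ∈ F, F.card ≤ n}) ∧
  (∀ α : Ordinal, α + 1 < omega1 →
    S (α + 1) = {F | ∃ (k : ℕ) (Fs : Fin k → Finset ℕ),
      (∀ i, Fs i ∈ S α) ∧
      (∀ i j : Fin k, i < j → ∀ a ∈ Fs i, ∀ b ∈ Fs j, a < b) ∧
      (∀ i, ∀ a ∈ Fs i, k ≤ a) ∧
      F = Finset.univ.biUnion Fs}) ∧
  (∀ α : Ordinal, α < omega1 → Order.IsSuccLimit α →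
    StrictMono (A α) ∧ (∀ n : ℕ, A α n < α) ∧ (∀ β < α, ∃ n : ℕ, β ≤ A α n) ∧
    S α = {F | ∃ n : ℕ, F ∈ S (A α n) ∧ ∀ a ∈ F, n ≤ a})

/-- The derived tree of `(T, ⊆)`: remove all maximal elements. -/
def derivedFinsetTree (T : Set (Finset ℕ)) : Set (Finset ℕ) :=
  {F ∈ T | ∃ G ∈ T, F ⊂ G}

/-- Transfinite iterates of the derivation of the tree `(T, ⊆)`. -/
noncomputable def derivFinsetTreeIter (T : Set (Finset ℕ)) : Ordinal → Set (Finset ℕ) :=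
  fun o =>
    Ordinal.limitRecOn o T (fun _ S => derivedFinsetTree S)
      (fun o _ ih => ⋂ (β : Ordinal) (h : β < o), ih β h)

/-- The order of the tree `(T, ⊆)`: the least `α` with `T^α = ∅`. -/
noncomputable def finsetTreeOrder (T : Set (Finset ℕ)) : Ordinal :=
  sInf {o : Ordinal | derivFinsetTreeIter T o = ∅}


namespace Ordinal

universe u

noncomputable def nadd : Ordinal.{u} → Ordinal.{u} → Ordinal.{u}
  | a, b => max (⨆ p : Set.Iio a, Order.succ (nadd p.1 b))
      (⨆ q : Set.Iio b, Order.succ (nadd a q.1))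
termination_by a b => (a, b)
decreasing_by
  · exact Prod.Lex.left _ _ p.2
  · exact Prod.Lex.right _ q.2

theorem nadd_le_iff {a b c : Ordinal.{u}} :
    nadd a b ≤ c ↔ (∀ a' < a, nadd a' b < c) ∧ (∀ b' < b, nadd a b' < c) := by
  rw [nadd, max_le_iff, Ordinal.iSup_le_iff, Ordinal.iSup_le_iff]
  simp only [Order.succ_le_iff, Subtype.forall, Set.mem_Iio]

theorem nadd_lt_nadd_right {a a' : Ordinal.{u}} (h : a' < a) (b : Ordinal.{u}) :
    nadd a' b < nadd a b := (nadd_le_iff.1 le_rfl).1 a' h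

theorem nadd_lt_nadd_left {b b' : Ordinal.{u}} (h : b' < b) (a : Ordinal.{u}) :
    nadd a b' < nadd a b := (nadd_le_iff.1 le_rfl).2 b' h

theorem nadd_le_nadd_right {a a' : Ordinal.{u}} (h : a' ≤ a) (b : Ordinal.{u}) :
    nadd a' b ≤ nadd a b := by
  rcases h.eq_or_lt with rfl | h
  · exact le_rfl
  · exact (nadd_lt_nadd_right h b).le

theorem nadd_le_nadd_left {b b' : Ordinal.{u}} (h : b' ≤ b) (a : Ordinal.{u}) :
    nadd a b' ≤ nadd a b := by
  rcases h.eq_or_lt with rfl | h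
  · exact le_rfl
  · exact (nadd_lt_nadd_left h a).le

theorem nadd_comm (a b : Ordinal.{u}) : nadd a b = nadd b a := by
  induction a using WellFoundedLT.induction generalizing b with
  | _ a IHa =>
    induction b using WellFoundedLT.induction with
    | _ b IHb =>
      apply le_antisymm
      · rw [nadd_le_iff]
        refine ⟨fun a' ha' => ?_, fun b' hb' => ?_⟩
        · rw [IHa a' ha']; exact nadd_lt_nadd_left ha' b
        · rw [IHb b' hb']; exact nadd_lt_nadd_right hb' a
      · rw [nadd_le_iff]
        refine ⟨fun b' hb' => ?_, fun a' ha' => ?_⟩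
        · rw [← IHb b' hb']; exact nadd_lt_nadd_left hb' a
        · rw [← IHa a' ha']; exact nadd_lt_nadd_right ha' b

theorem nadd_zero (a : Ordinal.{u}) : nadd a 0 = a := by
  induction a using WellFoundedLT.induction with
  | _ a IH =>
    apply le_antisymm
    · rw [nadd_le_iff]
      refine ⟨fun a' ha' => ?_, fun b' hb' => (not_lt_zero hb').elim⟩
      rw [IH a' ha']; exact ha'
    · by_contra hcon
      push_neg at hcon
      have h1 := nadd_lt_nadd_right hcon 0
      rw [IH _ hcon] at h1
      exact lt_irrefl _ h1

end Ordinal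

infixl:65 " ♯ " => Ordinal.nadd

namespace SchreierProof

open Ordinal

local notation "D" => derivFinsetTreeIter

theorem D_zero (T : Set (Finset ℕ)) : D T 0 = T :=
  Ordinal.limitRecOn_zero _ _ _

theorem D_succ (T : Set (Finset ℕ)) (o : Ordinal) :
    D T (o + 1) = derivedFinsetTree (D T o) := by
  rw [Ordinal.add_one_eq_succ]
  exact Ordinal.limitRecOn_succ _ _ _ _

theorem D_limit (T : Set (Finset ℕ)) {o : Ordinal} (ho : Order.IsSuccLimit o) :
    D T o = ⋂ (β : Ordinal) (_ : β < o), D T β := by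
  exact Ordinal.limitRecOn_limit _ _ _ _ ho

theorem derived_subset (T : Set (Finset ℕ)) : derivedFinsetTree T ⊆ T :=
  fun _ hF => hF.1

theorem D_subset (T : Set (Finset ℕ)) (o : Ordinal) : D T o ⊆ T := by
  induction o using Ordinal.induction with
  | _ o IH =>
    rcases Ordinal.zero_or_succ_or_isSuccLimit o with h0 | ⟨a, ha⟩ | hl
    · rw [h0, D_zero]
    · rw [← ha, ← Ordinal.add_one_eq_succ, D_succ]
      exact (derived_subset _).trans (IH a (by rw [← ha]; exact Order.lt_succ a))
    · rw [D_limit T hl]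
      intro F hF
      have := Set.mem_iInter.1 hF 0
      have := Set.mem_iInter.1 this hl.pos
      rwa [D_zero] at this

theorem D_antitone (T : Set (Finset ℕ)) {β o : Ordinal} (h : β ≤ o) : D T o ⊆ D T β := by
  induction o using Ordinal.induction with
  | _ o IH =>
    rcases eq_or_lt_of_le h with rfl | hlt
    · exact fun F hF => hF
    · rcases Ordinal.zero_or_succ_or_isSuccLimit o with h0 | ⟨a, ha⟩ | hl
      · exact absurd hlt (by simp [h0])
      · subst ha
        rw [← Ordinal.add_one_eq_succ, D_succ]
        exact (derived_subset _).trans (IH a (Order.lt_succ a) (Order.lt_succ_iff.1 hlt))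
      · rw [D_limit T hl]
        intro F hF
        exact Set.mem_iInter.1 (Set.mem_iInter.1 hF β) hlt

theorem D_mono {T T' : Set (Finset ℕ)} (h : T ⊆ T') (o : Ordinal) : D T o ⊆ D T' o := by
  induction o using Ordinal.induction with
  | _ o IH =>
    rcases Ordinal.zero_or_succ_or_isSuccLimit o with h0 | ⟨a, ha⟩ | hl
    · rw [h0, D_zero, D_zero]; exact h
    · subst ha
      rw [← Ordinal.add_one_eq_succ, D_succ, D_succ]
      rintro F ⟨hF, G, hG, hFG⟩
      exact ⟨IH a (Order.lt_succ a) hF, G, IH a (Order.lt_succ a) hG, hFG⟩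
    · rw [D_limit T hl, D_limit T' hl]
      intro F hF
      exact Set.mem_iInter.2 fun β => Set.mem_iInter.2 fun hβ =>
        IH β hβ (Set.mem_iInter.1 (Set.mem_iInter.1 hF β) hβ)

theorem D_add (T : Set (Finset ℕ)) (a b : Ordinal) : D T (a + b) = D (D T a) b := by
  induction b using Ordinal.induction with
  | _ b IH =>
    rcases Ordinal.zero_or_succ_or_isSuccLimit b with h0 | ⟨c, hc⟩ | hl
    · rw [h0, add_zero, D_zero]
    · subst hc
      rw [← Ordinal.add_one_eq_succ, ← add_assoc, D_succ, D_succ, IH c (Order.lt_succ c)]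
    · have hab : Order.IsSuccLimit (a + b) := Ordinal.isSuccLimit_add a hl
      rw [D_limit T hab, D_limit (D T a) hl]
      apply Set.Subset.antisymm
      · intro F hF
        refine Set.mem_iInter.2 fun β => Set.mem_iInter.2 fun hβ => ?_
        rw [← IH β hβ]
        exact Set.mem_iInter.1 (Set.mem_iInter.1 hF (a + β))
          ((add_lt_add_iff_left a).2 hβ)
      · intro F hF
        refine Set.mem_iInter.2 fun β => Set.mem_iInter.2 fun hβ => ?_
        rcases lt_or_ge β a with hβa | haβ
        · have hsub : D T a ⊆ D T β := D_antitone T hβa.le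
          have h0 : F ∈ D (D T a) 0 := Set.mem_iInter.1 (Set.mem_iInter.1 hF 0) hl.pos
          rw [D_zero] at h0
          exact hsub h0
        · have hc : a + (β - a) = β := Ordinal.add_sub_cancel_of_le haβ
          have hclt : β - a < b := by
            have : a + (β - a) < a + b := by rw [hc]; exact hβ
            exact (add_lt_add_iff_left a).1 this
          have := Set.mem_iInter.1 (Set.mem_iInter.1 hF (β - a)) hclt
          rw [← IH (β - a) hclt] at this
          exact hc ▸ this

def Hered (T : Set (Finset ℕ)) : Prop := ∀ ⦃F G : Finset ℕ⦄, F ⊆ G → G ∈ T → F ∈ T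

theorem derived_hered {T : Set (Finset ℕ)} (hT : Hered T) : Hered (derivedFinsetTree T) := by
  rintro F G hFG ⟨hG, H, hH, hGH⟩
  exact ⟨hT hFG hG, H, hH, lt_of_le_of_lt (Finset.le_iff_subset.mpr hFG) hGH⟩

theorem D_hered {T : Set (Finset ℕ)} (hT : Hered T) (o : Ordinal) : Hered (D T o) := by
  induction o using Ordinal.induction with
  | _ o IH =>
    rcases Ordinal.zero_or_succ_or_isSuccLimit o with h0 | ⟨a, ha⟩ | hl
    · rw [h0, D_zero]; exact hT
    · subst ha
      rw [← Ordinal.add_one_eq_succ, D_succ]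
      exact derived_hered (IH a (Order.lt_succ a))
    · rw [D_limit T hl]
      intro F G hFG hG
      exact Set.mem_iInter.2 fun β => Set.mem_iInter.2 fun hβ =>
        IH β hβ hFG (Set.mem_iInter.1 (Set.mem_iInter.1 hG β) hβ)

theorem le_weight {T : Set (Finset ℕ)} (w : Finset ℕ → Ordinal)
    (hw : ∀ F ∈ T, ∀ G ∈ T, F ⊂ G → w G < w F) :
    ∀ o F, F ∈ D T o → o ≤ w F := by
  intro o
  induction o using Ordinal.induction with
  | _ o IH =>
    rcases Ordinal.zero_or_succ_or_isSuccLimit o with h0 | ⟨a, ha⟩ | hl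
    · simp [h0]
    · subst ha
      intro F hF
      rw [← Ordinal.add_one_eq_succ, D_succ] at hF
      obtain ⟨hF', G, hG, hFG⟩ := hF
      have h1 : a ≤ w G := IH a (Order.lt_succ a) G hG
      have h2 : w G < w F := hw F (D_subset T a hF') G (D_subset T a hG) hFG
      exact Order.succ_le_of_lt (lt_of_le_of_lt h1 h2)
    · intro F hF
      by_contra hcon
      push_neg at hcon
      have hlt : Order.succ (w F) < o := hl.succ_lt hcon
      have : Order.succ (w F) ≤ w F :=
        IH _ hlt F (D_antitone T hlt.le hF)
      exact absurd this (by simp)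

theorem D_image_union (F₀ : Finset ℕ) (T : Set (Finset ℕ))
    (hdisj : ∀ G ∈ T, Disjoint F₀ G) (o : Ordinal) :
    D ((fun G => F₀ ∪ G) '' T) o = (fun G => F₀ ∪ G) '' (D T o) := by
  have key : ∀ G ∈ T, ∀ G' ∈ T, F₀ ∪ G ⊆ F₀ ∪ G' → G ⊆ G' := by
    intro G hG G' _ hsub a ha
    have : a ∈ F₀ ∪ G' := hsub (Finset.mem_union_right _ ha)
    rcases Finset.mem_union.1 this with h | h
    · exact absurd ha (Finset.disjoint_left.mp (hdisj G hG) h)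
    · exact h
  have keyss : ∀ G ∈ T, ∀ G' ∈ T, (F₀ ∪ G ⊂ F₀ ∪ G' ↔ G ⊂ G') := by
    intro G hG G' hG'
    constructor
    · intro hss
      refine ⟨key G hG G' hG' hss.subset, fun hsub => ?_⟩
      exact hss.not_subset (Finset.union_subset_union_right hsub)
    · intro hss
      refine ⟨Finset.union_subset_union_right hss.subset, fun hsub => ?_⟩
      exact hss.not_subset (key G' hG' G hG hsub)
  induction o using Ordinal.induction with
  | _ o IH =>
    rcases Ordinal.zero_or_succ_or_isSuccLimit o with h0 | ⟨a, ha⟩ | hl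
    · rw [h0, D_zero, D_zero]
    · subst ha
      rw [← Ordinal.add_one_eq_succ, D_succ ((fun G => F₀ ∪ G) '' T) a, D_succ T a,
        IH a (Order.lt_succ a)]
      apply Set.Subset.antisymm
      · rintro H ⟨⟨G, hG, rfl⟩, H', ⟨G', hG', rfl⟩, hss⟩
        have hGT := D_subset T a hG
        have hGT' := D_subset T a hG'
        exact ⟨G, ⟨hG, G', hG', (keyss G hGT G' hGT').1 hss⟩, rfl⟩
      · rintro H ⟨G, ⟨hG, G', hG', hss⟩, rfl⟩
        have hGT := D_subset T a hG
        have hGT' := D_subset T a hG'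
        exact ⟨⟨G, hG, rfl⟩, F₀ ∪ G', ⟨G', hG', rfl⟩, (keyss G hGT G' hGT').2 hss⟩
    · rw [D_limit _ hl, D_limit _ hl]
      apply Set.Subset.antisymm
      · intro H hH
        have h0 : H ∈ (fun G => F₀ ∪ G) '' T := by
          have := Set.mem_iInter.1 (Set.mem_iInter.1 hH 0) hl.pos
          rwa [IH 0 hl.pos, D_zero] at this
        obtain ⟨G₀, hG₀, rfl⟩ := h0
        refine ⟨G₀, Set.mem_iInter.2 fun β => Set.mem_iInter.2 fun hβ => ?_, rfl⟩
        have := Set.mem_iInter.1 (Set.mem_iInter.1 hH β) hβ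
        rw [IH β hβ] at this
        obtain ⟨G, hG, hEq⟩ := this
        have hGT := D_subset T β hG
        have : G = G₀ := by
          apply Finset.Subset.antisymm
          · exact key G hGT G₀ hG₀ (le_of_eq hEq)
          · exact key G₀ hG₀ G hGT (le_of_eq hEq.symm)
        rwa [← this]
      · rintro H ⟨G, hG, rfl⟩
        refine Set.mem_iInter.2 fun β => Set.mem_iInter.2 fun hβ => ?_
        rw [IH β hβ]
        exact ⟨G, Set.mem_iInter.1 (Set.mem_iInter.1 hG β) hβ, rfl⟩

def Res (T : Set (Finset ℕ)) (n : ℕ) : Set (Finset ℕ) := {F ∈ T | ∀ a ∈ F, n ≤ a}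

theorem Res_zero (T : Set (Finset ℕ)) : Res T 0 = T := by
  ext F; simp [Res]

theorem Res_hered {T : Set (Finset ℕ)} (hT : Hered T) (n : ℕ) : Hered (Res T n) := by
  rintro F G hFG ⟨hG, hG2⟩
  exact ⟨hT hFG hG, fun a ha => hG2 a (hFG ha)⟩




section Nadd

open Ordinal

theorem nadd_le_left' (a b : Ordinal) : a ≤ a ♯ b := by
  have := Ordinal.nadd_le_nadd_left (zero_le (a := b)) a
  rwa [Ordinal.nadd_zero] at this

theorem FID {δ : Ordinal} (hδ : δ ≠ 0)
    (hCL : ∀ a b, a < δ → b < δ → a ♯ b < δ) :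
    ∀ (m : Ordinal) (q s : ℕ) (r t : Ordinal), r < δ → t < δ →
      δ * (q + s : ℕ) + (r ♯ t) ≤ m →
      (δ * q + r) ♯ (δ * s + t) ≤ δ * (q + s : ℕ) + (r ♯ t) := by
  intro m
  induction m using Ordinal.induction with
  | _ m IHm =>
    have core : ∀ (q s : ℕ) (r t : Ordinal), r < δ → t < δ →
        δ * (q + s : ℕ) + (r ♯ t) ≤ m →
        ∀ L' < δ * q + r, L' ♯ (δ * s + t) < δ * (q + s : ℕ) + (r ♯ t) := by
      intro q s r t hr ht hm L' hL'
      have hdr : δ * (L' / δ) + L' % δ = L' := Ordinal.div_add_mod L' δ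
      have hmod : L' % δ < δ := Ordinal.mod_lt L' hδ
      have hdivlt : L' / δ < (q : Ordinal) + 1 := by
        rw [Ordinal.div_lt hδ]
        calc L' < δ * q + r := hL'
        _ < δ * q + δ := by exact add_lt_add_right hr _
        _ = δ * ((q : Ordinal) + 1) := by rw [mul_add_one]
      have hdivnat : L' / δ < Ordinal.omega0 := by
        refine lt_of_lt_of_le hdivlt ?_
        have h1 : ((q + 1 : ℕ) : Ordinal) = (q : Ordinal) + 1 := by push_cast; ring
        rw [← h1]
        exact (Ordinal.nat_lt_omega0 (q+1)).le
      obtain ⟨dn, hdn⟩ := Ordinal.lt_omega0.1 hdivnat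
      rw [hdn] at hdivlt hdr
      have hdnq : dn ≤ q := by
        have h2 : dn < q + 1 := by exact_mod_cast hdivlt
        omega
      rcases lt_or_eq_of_le hdnq with hlt | heq
      · have hbound : δ * (dn + s : ℕ) + (L' % δ ♯ t) < δ * (q + s : ℕ) + (r ♯ t) := by
          calc δ * (dn + s : ℕ) + (L' % δ ♯ t)
              < δ * (dn + s : ℕ) + δ := add_lt_add_right (hCL _ _ hmod ht) _
          _ = δ * ((dn + s : ℕ) + 1) := by rw [mul_add_one]
          _ ≤ δ * (q + s : ℕ) := by
                apply mul_le_mul_right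
                have h1 : ((dn + s + 1 : ℕ) : Ordinal) = ((dn + s : ℕ) : Ordinal) + 1 := by
                  push_cast; ring
                rw [← h1]
                exact Nat.cast_le.2 (by omega)
          _ ≤ δ * (q + s : ℕ) + (r ♯ t) := self_le_add_right _ _
        have hmeas : δ * (dn + s : ℕ) + (L' % δ ♯ t) < m := hbound.trans_le hm
        have hrec := IHm _ hmeas dn s (L' % δ) t hmod ht le_rfl
        calc L' ♯ (δ * s + t) = (δ * dn + L' % δ) ♯ (δ * s + t) := by rw [hdr]
        _ ≤ δ * (dn + s : ℕ) + (L' % δ ♯ t) := hrec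
        _ < δ * (q + s : ℕ) + (r ♯ t) := hbound
      · subst heq
        have hr' : L' % δ < r := by
          have h3 : δ * dn + L' % δ < δ * dn + r := by rw [hdr]; exact hL'
          exact (add_lt_add_iff_left _).1 h3
        have hbound : δ * (dn + s : ℕ) + (L' % δ ♯ t) < δ * (dn + s : ℕ) + (r ♯ t) :=
          add_lt_add_right (Ordinal.nadd_lt_nadd_right hr' t) _
        have hmeas : δ * (dn + s : ℕ) + (L' % δ ♯ t) < m := hbound.trans_le hm
        have hrec := IHm _ hmeas dn s (L' % δ) t hmod ht le_rfl
        calc L' ♯ (δ * s + t) = (δ * dn + L' % δ) ♯ (δ * s + t) := by rw [hdr]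
        _ ≤ δ * (dn + s : ℕ) + (L' % δ ♯ t) := hrec
        _ < δ * (dn + s : ℕ) + (r ♯ t) := hbound
    intro q s r t hr ht hm
    rw [Ordinal.nadd_le_iff]
    constructor
    · exact fun L' hL' => core q s r t hr ht hm L' hL'
    · intro R' hR'
      have hm' : δ * (s + q : ℕ) + (t ♯ r) ≤ m := by
        rwa [Nat.add_comm s q, Ordinal.nadd_comm t r]
      have := core s q t r ht hr hm' R' hR'
      rwa [Ordinal.nadd_comm R' _, Nat.add_comm s q, Ordinal.nadd_comm t r] at this

theorem nadd_lt_opow {e : Ordinal} : ∀ a b, a < Ordinal.omega0 ^ e →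
    b < Ordinal.omega0 ^ e → a ♯ b < Ordinal.omega0 ^ e := by
  induction e using Ordinal.induction with
  | _ e IH =>
    rcases Ordinal.zero_or_succ_or_isSuccLimit e with h0 | ⟨d, hd⟩ | hl
    · subst h0
      intro a b ha hb
      rw [Ordinal.opow_zero] at *
      rw [Ordinal.lt_one_iff_zero] at ha hb
      subst ha; subst hb
      simpa [Ordinal.nadd_zero] using zero_lt_one
    · subst hd
      intro a b ha hb
      rw [Ordinal.opow_succ] at *
      have hδ : (Ordinal.omega0 ^ d) ≠ 0 := Ordinal.opow_ne_zero d Ordinal.omega0_ne_zero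
      set δ := Ordinal.omega0 ^ d with hδdef
      have hCL : ∀ x y, x < δ → y < δ → x ♯ y < δ := IH d (Order.lt_succ d)
      obtain ⟨m', hm', ham⟩ := (Ordinal.lt_mul_iff_of_isSuccLimit Ordinal.isSuccLimit_omega0).1 ha
      obtain ⟨n', hn', hbn⟩ := (Ordinal.lt_mul_iff_of_isSuccLimit Ordinal.isSuccLimit_omega0).1 hb
      obtain ⟨mn, rfl⟩ := Ordinal.lt_omega0.1 hm'
      obtain ⟨nn, rfl⟩ := Ordinal.lt_omega0.1 hn'
      have hda : δ * (a / δ) + a % δ = a := Ordinal.div_add_mod a δ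
      have hdb : δ * (b / δ) + b % δ = b := Ordinal.div_add_mod b δ
      have hdalt : a / δ < (mn : Ordinal) := (Ordinal.div_lt hδ).2 ham
      have hdblt : b / δ < (nn : Ordinal) := (Ordinal.div_lt hδ).2 hbn
      obtain ⟨ka, hka⟩ := Ordinal.lt_omega0.1 (hdalt.trans (Ordinal.nat_lt_omega0 mn))
      obtain ⟨kb, hkb⟩ := Ordinal.lt_omega0.1 (hdblt.trans (Ordinal.nat_lt_omega0 nn))
      rw [hka] at hda
      rw [hkb] at hdb
      have hfid := FID hδ hCL (δ * ((ka + kb : ℕ) : Ordinal) + (a % δ ♯ b % δ))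
        ka kb (a % δ) (b % δ) (Ordinal.mod_lt a hδ) (Ordinal.mod_lt b hδ) le_rfl
      calc a ♯ b = (δ * ka + a % δ) ♯ (δ * kb + b % δ) := by rw [hda, hdb]
      _ ≤ δ * ((ka + kb : ℕ) : Ordinal) + (a % δ ♯ b % δ) := hfid
      _ < δ * ((ka + kb : ℕ) : Ordinal) + δ :=
            add_lt_add_right (hCL _ _ (Ordinal.mod_lt a hδ) (Ordinal.mod_lt b hδ)) _
      _ = δ * (((ka + kb : ℕ) : Ordinal) + 1) := by rw [mul_add_one]
      _ < δ * Ordinal.omega0 := by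
            apply mul_lt_mul_of_pos_left _ (Ordinal.opow_pos d Ordinal.omega0_pos)
            have h1 : ((ka + kb : ℕ) : Ordinal) + 1 = ((ka + kb + 1 : ℕ) : Ordinal) := by
              push_cast; ring
            rw [h1]
            exact Ordinal.nat_lt_omega0 _
    · intro a b ha hb
      obtain ⟨c1, hc1, hac⟩ := (Ordinal.lt_opow_of_isSuccLimit Ordinal.omega0_ne_zero hl).1 ha
      obtain ⟨c2, hc2, hbc⟩ := (Ordinal.lt_opow_of_isSuccLimit Ordinal.omega0_ne_zero hl).1 hb
      set c := max c1 c2 with hc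
      have hcl : c < e := max_lt hc1 hc2
      have hsucc : c + 1 < e := by rw [Ordinal.add_one_eq_succ]; exact hl.succ_lt hcl
      have ha' : a < Ordinal.omega0 ^ (c + 1) := by
        refine hac.trans_le ?_
        exact Ordinal.opow_le_opow_right Ordinal.omega0_pos
          ((le_max_left c1 c2).trans (self_le_add_right c 1))
      have hb' : b < Ordinal.omega0 ^ (c + 1) := by
        refine hbc.trans_le ?_
        exact Ordinal.opow_le_opow_right Ordinal.omega0_pos
          ((le_max_right c1 c2).trans (self_le_add_right c 1))
      have := IH (c + 1) hsucc a b ha' hb'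
      refine this.trans_le (Ordinal.opow_le_opow_right Ordinal.omega0_pos hsucc.le)

theorem opow_mul_nadd_le {e : Ordinal} (p : ℕ) {x y : Ordinal}
    (hx : x ≤ Ordinal.omega0 ^ e * p) (hy : y ≤ Ordinal.omega0 ^ e) :
    x ♯ y ≤ Ordinal.omega0 ^ e * (p + 1 : ℕ) := by
  set δ := Ordinal.omega0 ^ e with hδdef
  have hδ : δ ≠ 0 := Ordinal.opow_ne_zero e Ordinal.omega0_ne_zero
  have hfid := FID hδ (fun a b ha hb => nadd_lt_opow a b ha hb)
    (δ * ((p + 1 : ℕ) : Ordinal) + ((0:Ordinal) ♯ 0)) p 1 0 0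
    (pos_iff_ne_zero.2 hδ) (pos_iff_ne_zero.2 hδ)
    le_rfl
  have h1 := hfid
  rw [Nat.cast_one, add_zero, add_zero, mul_one, Ordinal.nadd_zero, add_zero] at h1
  calc x ♯ y ≤ (δ * p) ♯ δ := by
        exact (Ordinal.nadd_le_nadd_right hx _).trans (Ordinal.nadd_le_nadd_left hy _)
  _ ≤ δ * ((p + 1 : ℕ) : Ordinal) := h1

end Nadd


theorem nadd_le_right' (a b : Ordinal) : b ≤ a ♯ b := by
  rw [Ordinal.nadd_comm]; exact nadd_le_left' b a



section ConvM

def cutL (H : Finset ℕ) (c : ℕ) : Finset ℕ := H.filter (fun a => a < c)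
def cutR (H : Finset ℕ) (c : ℕ) : Finset ℕ := H.filter (fun a => ¬ a < c)

theorem cutL_union_cutR (H : Finset ℕ) (c : ℕ) : cutL H c ∪ cutR H c = H :=
  Finset.filter_union_filter_not_eq _ H

theorem cutL_subset (H : Finset ℕ) (c : ℕ) : cutL H c ⊆ H := Finset.filter_subset _ _
theorem cutR_subset (H : Finset ℕ) (c : ℕ) : cutR H c ⊆ H := Finset.filter_subset _ _

theorem cutL_mono {H H' : Finset ℕ} (h : H ⊆ H') (c : ℕ) : cutL H c ⊆ cutL H' c :=
  Finset.filter_subset_filter _ h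
theorem cutR_mono {H H' : Finset ℕ} (h : H ⊆ H') (c : ℕ) : cutR H c ⊆ cutR H' c :=
  Finset.filter_subset_filter _ h

theorem mem_cutL {H : Finset ℕ} {c a : ℕ} (h : a ∈ cutL H c) : a ∈ H ∧ a < c :=
  Finset.mem_filter.1 h
theorem mem_cutR {H : Finset ℕ} {c a : ℕ} (h : a ∈ cutR H c) : a ∈ H ∧ c ≤ a := by
  have := Finset.mem_filter.1 h; exact ⟨this.1, not_lt.1 this.2⟩

theorem cutL_all {H : Finset ℕ} {c : ℕ} (h : ∀ a ∈ H, a < c) : cutL H c = H :=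
  Finset.filter_true_of_mem h

theorem cutR_all {H : Finset ℕ} {c : ℕ} (h : ∀ a ∈ H, a < c) : cutR H c = ∅ := by
  apply Finset.filter_false_of_mem
  intro a ha
  simpa using h a ha

theorem cut_ne {H H' : Finset ℕ} (hss : H ⊂ H') (c : ℕ) :
    cutL H c ⊂ cutL H' c ∨ cutR H c ⊂ cutR H' c := by
  by_contra hcon
  push_neg at hcon
  have h1 : cutL H c = cutL H' c :=
    Finset.Subset.antisymm (cutL_mono hss.subset c)
      (by by_contra h2; exact hcon.1 ⟨cutL_mono hss.subset c, h2⟩)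
  have h2 : cutR H c = cutR H' c :=
    Finset.Subset.antisymm (cutR_mono hss.subset c)
      (by by_contra h3; exact hcon.2 ⟨cutR_mono hss.subset c, h3⟩)
  have : H = H' := by rw [← cutL_union_cutR H c, ← cutL_union_cutR H' c, h1, h2]
  exact hss.ne this

def Conv (T₁ T₂ : Set (Finset ℕ)) : Set (Finset ℕ) :=
  {H | ∃ c : ℕ, cutL H c ∈ T₁ ∧ cutR H c ∈ T₂}

theorem conv_of_split {T₁ T₂ : Set (Finset ℕ)} {F G : Finset ℕ}
    (hF : F ∈ T₁) (hG : G ∈ T₂) (hsep : ∀ a ∈ F, ∀ b ∈ G, a < b) :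
    F ∪ G ∈ Conv T₁ T₂ := by
  rcases G.eq_empty_or_nonempty with rfl | hGne
  · refine ⟨(F ∪ ∅).sup id + 1, ?_, ?_⟩
    · rw [cutL_all (fun a ha => Nat.lt_succ_of_le (Finset.le_sup (f := id) ha : a ≤ _))]
      simpa using hF
    · rw [cutR_all (fun a ha => Nat.lt_succ_of_le (Finset.le_sup (f := id) ha : a ≤ _))]
      exact hG
  · refine ⟨G.min' hGne, ?_, ?_⟩
    · have : cutL (F ∪ G) (G.min' hGne) = F := by
        apply Finset.Subset.antisymm
        · intro a ha
          obtain ⟨haH, halt⟩ := mem_cutL ha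
          rcases Finset.mem_union.1 haH with h | h
          · exact h
          · exact absurd (G.min'_le a h) (not_le.2 halt)
        · intro a ha
          exact Finset.mem_filter.2 ⟨Finset.mem_union_left _ ha,
            hsep a ha _ (G.min'_mem hGne)⟩
      rw [this]; exact hF
    · have : cutR (F ∪ G) (G.min' hGne) = G := by
        apply Finset.Subset.antisymm
        · intro a ha
          obtain ⟨haH, hage⟩ := mem_cutR ha
          rcases Finset.mem_union.1 haH with h | h
          · exact absurd (hsep a h _ (G.min'_mem hGne)) (not_lt.2 hage)
          · exact h
        · intro a ha
          exact Finset.mem_filter.2 ⟨Finset.mem_union_right _ ha,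
            not_lt.2 (G.min'_le a ha)⟩
      rw [this]; exact hG

def UU (Sb : Set (Finset ℕ)) : ℕ → Set (Finset ℕ)
  | 0 => {(∅ : Finset ℕ)}
  | (p+1) => Conv (UU Sb p) Sb

open scoped Classical in
noncomputable def wU (Sb : Set (Finset ℕ)) (v : Finset ℕ → Ordinal) : ℕ → Finset ℕ → Ordinal
  | 0, _ => 0
  | (p+1), H => (Finset.range (H.sup id + 2)).sup
      (fun c => if cutL H c ∈ UU Sb p ∧ cutR H c ∈ Sb
        then wU Sb v p (cutL H c) ♯ v (cutR H c) else 0)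

open scoped Classical in
noncomputable def valU (Sb : Set (Finset ℕ)) (v : Finset ℕ → Ordinal) (p : ℕ)
    (H : Finset ℕ) (c : ℕ) : Ordinal :=
  if cutL H c ∈ UU Sb p ∧ cutR H c ∈ Sb
    then wU Sb v p (cutL H c) ♯ v (cutR H c) else 0

theorem wU_succ (Sb : Set (Finset ℕ)) (v : Finset ℕ → Ordinal) (p : ℕ) (H : Finset ℕ) :
    wU Sb v (p+1) H = (Finset.range (H.sup id + 2)).sup (valU Sb v p H) := rfl

theorem valU_le (Sb : Set (Finset ℕ)) (v : Finset ℕ → Ordinal) (p : ℕ) (H : Finset ℕ)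
    (c : ℕ) : valU Sb v p H c ≤ wU Sb v (p+1) H := by
  rw [wU_succ]
  rcases le_or_gt c (H.sup id + 1) with hc | hc
  · exact Finset.le_sup (Finset.mem_range.2 (by omega))
  · have hL : cutL H c = cutL H (H.sup id + 1) := by
      rw [cutL_all (fun a ha => by have : a ≤ _ := Finset.le_sup (f := id) ha; omega),
        cutL_all (fun a ha => by have : a ≤ _ := Finset.le_sup (f := id) ha; omega)]
    have hR : cutR H c = cutR H (H.sup id + 1) := by
      rw [cutR_all (fun a ha => by have : a ≤ _ := Finset.le_sup (f := id) ha; omega),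
        cutR_all (fun a ha => by have : a ≤ _ := Finset.le_sup (f := id) ha; omega)]
    have : valU Sb v p H c = valU Sb v p H (H.sup id + 1) := by
      unfold valU; rw [hL, hR]
    rw [this]
    exact Finset.le_sup (Finset.mem_range.2 (by omega))

section Pack

variable {Sb : Set (Finset ℕ)} {β : Ordinal} {v : Finset ℕ → Ordinal}
  (hSbH : Hered Sb) (hSb0 : ∅ ∈ Sb)
  (hv : ∀ F ∈ Sb, ∀ G ∈ Sb, F ⊂ G → v G < v F)
  (hv0 : v ∅ ≤ omega0 ^ β) (hvne : ∀ F ∈ Sb, F ≠ ∅ → v F < omega0 ^ β)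

include hv in
theorem v_antitone : ∀ F ∈ Sb, ∀ G ∈ Sb, F ⊆ G → v G ≤ v F := by
  intro F hF G hG hFG
  rcases eq_or_ne F G with rfl | hne
  · exact le_rfl
  · exact (hv F hF G hG ⟨hFG, fun h => hne (Finset.Subset.antisymm hFG h)⟩).le

include hSb0 hv hv0 in
theorem v_le : ∀ F ∈ Sb, v F ≤ omega0 ^ β := by
  intro F hF
  exact (v_antitone hv ∅ hSb0 F hF (Finset.empty_subset F)).trans hv0

include hSbH hSb0 hv hv0 hvne in
theorem UU_pack : ∀ p : ℕ, Hered (UU Sb p) ∧ (∅ ∈ UU Sb p) ∧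
    (∀ H ∈ UU Sb p, ∀ H' ∈ UU Sb p, H ⊂ H' → wU Sb v p H' < wU Sb v p H) ∧
    (∀ H ∈ UU Sb p, wU Sb v p H ≤ omega0 ^ β * p) ∧
    (∀ H ∈ UU Sb p, H ≠ ∅ → wU Sb v p H < omega0 ^ β * p) := by
  intro p
  induction p with
  | zero =>
    refine ⟨?_, rfl, ?_, ?_, ?_⟩
    · intro F G hFG hG
      simp only [UU, Set.mem_singleton_iff] at *
      subst hG
      exact Finset.subset_empty.1 hFG
    · intro H hH H' hH' hss
      simp only [UU, Set.mem_singleton_iff] at hH hH'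
      subst hH; subst hH'
      exact absurd hss (by simp)
    · intro H hH
      simp [wU]
    · intro H hH hne
      simp only [UU, Set.mem_singleton_iff] at hH
      exact absurd hH hne
  | succ p IH =>
    obtain ⟨IHh, IH0, IHs, IHb, IHbs⟩ := IH
    have hvalid : ∀ H ∈ UU Sb (p+1), ∀ c : ℕ, cutL H c ∈ UU Sb p → cutR H c ∈ Sb →
        valU Sb v p H c = wU Sb v p (cutL H c) ♯ v (cutR H c) := by
      intro H _ c h1 h2
      unfold valU
      rw [if_pos ⟨h1, h2⟩]
    constructor
    · -- hereditary
      rintro F G hFG ⟨c, h1, h2⟩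
      exact ⟨c, IHh (cutL_mono hFG c) h1, hSbH (cutR_mono hFG c) h2⟩
    refine ⟨⟨0, ?_, ?_⟩, ?_, ?_, ?_⟩
    · simpa [cutL] using IH0
    · simpa [cutR] using hSb0
    · -- strict decrease
      intro H hH H' hH' hss
      -- positivity of wU (p+1) H
      obtain ⟨c', hc1', hc2'⟩ := hH'
      have hcutsub : cutL H c' ∈ UU Sb p := IHh (cutL_mono hss.subset c') hc1'
      have hcutsub2 : cutR H c' ∈ Sb := hSbH (cutR_mono hss.subset c') hc2'
      have hpos : 0 < wU Sb v (p+1) H := by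
        have hval : valU Sb v p H c' = wU Sb v p (cutL H c') ♯ v (cutR H c') := by
          unfold valU; rw [if_pos ⟨hcutsub, hcutsub2⟩]
        have h1 : 0 < valU Sb v p H c' := by
          rw [hval]
          rcases cut_ne hss c' with hcut | hcut
          · have := IHs _ hcutsub _ hc1' hcut
            have h2 : 0 < wU Sb v p (cutL H c') := lt_of_le_of_lt zero_le this
            exact lt_of_lt_of_le h2 (nadd_le_left' _ _)
          · have := hv _ hcutsub2 _ hc2' hcut
            have h2 : 0 < v (cutR H c') := lt_of_le_of_lt zero_le this
            exact lt_of_lt_of_le h2 (nadd_le_right' _ _)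
        exact lt_of_lt_of_le h1 (valU_le Sb v p H c')
      rw [wU_succ]
      rw [Finset.sup_lt_iff hpos]
      intro c _
      by_cases hcond : cutL H' c ∈ UU Sb p ∧ cutR H' c ∈ Sb
      · have hLsub : cutL H c ∈ UU Sb p := IHh (cutL_mono hss.subset c) hcond.1
        have hRsub : cutR H c ∈ Sb := hSbH (cutR_mono hss.subset c) hcond.2
        have hval' : valU Sb v p H' c = wU Sb v p (cutL H' c) ♯ v (cutR H' c) := by
          unfold valU; rw [if_pos hcond]
        have hval : valU Sb v p H c = wU Sb v p (cutL H c) ♯ v (cutR H c) := by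
          unfold valU; rw [if_pos ⟨hLsub, hRsub⟩]
        have hstrict : wU Sb v p (cutL H' c) ♯ v (cutR H' c)
            < wU Sb v p (cutL H c) ♯ v (cutR H c) := by
          rcases cut_ne hss c with hcut | hcut
          · have h1 := IHs _ hLsub _ hcond.1 hcut
            have h2 : v (cutR H' c) ≤ v (cutR H c) :=
              v_antitone hv _ hRsub _ hcond.2 (cutR_mono hss.subset c)
            calc wU Sb v p (cutL H' c) ♯ v (cutR H' c)
                ≤ wU Sb v p (cutL H' c) ♯ v (cutR H c) := Ordinal.nadd_le_nadd_left h2 _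
            _ < wU Sb v p (cutL H c) ♯ v (cutR H c) := Ordinal.nadd_lt_nadd_right h1 _
          · have h1 := hv _ hRsub _ hcond.2 hcut
            have h2 : wU Sb v p (cutL H' c) ≤ wU Sb v p (cutL H c) := by
              rcases eq_or_ne (cutL H c) (cutL H' c) with heq | hne
              · rw [heq]
              · exact (IHs _ hLsub _ hcond.1 ⟨cutL_mono hss.subset c,
                  fun h => hne (Finset.Subset.antisymm (cutL_mono hss.subset c) h)⟩).le
            calc wU Sb v p (cutL H' c) ♯ v (cutR H' c)
                ≤ wU Sb v p (cutL H c) ♯ v (cutR H' c) := Ordinal.nadd_le_nadd_right h2 _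
            _ < wU Sb v p (cutL H c) ♯ v (cutR H c) := Ordinal.nadd_lt_nadd_left h1 _
        have : valU Sb v p H' c < valU Sb v p H c := by rw [hval', hval]; exact hstrict
        exact lt_of_lt_of_le this (valU_le Sb v p H c)
      · have : valU Sb v p H' c = 0 := by unfold valU; rw [if_neg hcond]
        rw [this]; exact hpos
    · -- bound
      intro H _
      rw [wU_succ]
      apply Finset.sup_le
      intro c _
      by_cases hcond : cutL H c ∈ UU Sb p ∧ cutR H c ∈ Sb
      · have : valU Sb v p H c = wU Sb v p (cutL H c) ♯ v (cutR H c) := by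
          unfold valU; rw [if_pos hcond]
        rw [this]
        exact opow_mul_nadd_le p (IHb _ hcond.1) (v_le hSb0 hv hv0 _ hcond.2)
      · have : valU Sb v p H c = 0 := by unfold valU; rw [if_neg hcond]
        rw [this]; exact zero_le
    · -- strict bound for nonempty
      intro H hH hne
      have hbpos : (0:Ordinal) < omega0 ^ β * (p+1:ℕ) := by
        apply mul_pos (Ordinal.opow_pos β Ordinal.omega0_pos)
        exact_mod_cast Nat.succ_pos p
      rw [wU_succ, Finset.sup_lt_iff hbpos]
      intro c _
      by_cases hcond : cutL H c ∈ UU Sb p ∧ cutR H c ∈ Sb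
      · have hval : valU Sb v p H c = wU Sb v p (cutL H c) ♯ v (cutR H c) := by
          unfold valU; rw [if_pos hcond]
        rw [hval]
        rcases (cutR H c).eq_empty_or_nonempty with hRe | hRne
        · have hLeq : cutL H c = H := by
            have h9 := cutL_union_cutR H c
            rw [hRe, Finset.union_empty] at h9
            exact h9
          have h1 : wU Sb v p (cutL H c) < omega0 ^ β * p := by
            apply IHbs _ hcond.1
            rw [hLeq]; exact hne
          calc wU Sb v p (cutL H c) ♯ v (cutR H c)
              < (omega0 ^ β * p) ♯ v (cutR H c) := Ordinal.nadd_lt_nadd_right h1 _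
          _ ≤ omega0 ^ β * (p+1:ℕ) :=
              opow_mul_nadd_le p le_rfl (v_le hSb0 hv hv0 _ hcond.2)
        · have h1 : v (cutR H c) < omega0 ^ β :=
            hvne _ hcond.2 (Finset.nonempty_iff_ne_empty.1 hRne)
          calc wU Sb v p (cutL H c) ♯ v (cutR H c)
              < wU Sb v p (cutL H c) ♯ (omega0 ^ β) := Ordinal.nadd_lt_nadd_left h1 _
          _ ≤ omega0 ^ β * (p+1:ℕ) := opow_mul_nadd_le p (IHb _ hcond.1) le_rfl
      · have : valU Sb v p H c = 0 := by unfold valU; rw [if_neg hcond]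
        rw [this]; exact hbpos

include hSb0 in
omit hSbH hv hv0 hvne in
theorem UU_mono : ∀ {q p : ℕ}, q ≤ p → ∀ H ∈ UU Sb q,
    H ∈ UU Sb p ∧ wU Sb v q H ≤ wU Sb v p H := by
  have step : ∀ p : ℕ, ∀ H ∈ UU Sb p, H ∈ UU Sb (p+1) ∧ wU Sb v p H ≤ wU Sb v (p+1) H := by
    intro p H hH
    have hcL : cutL H (H.sup id + 1) = H :=
      cutL_all (fun a ha => by have : a ≤ _ := Finset.le_sup (f := id) ha; omega)
    have hcR : cutR H (H.sup id + 1) = ∅ :=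
      cutR_all (fun a ha => by have : a ≤ _ := Finset.le_sup (f := id) ha; omega)
    have hmem : H ∈ UU Sb (p+1) := ⟨H.sup id + 1, by rw [hcL]; exact hH, by rw [hcR]; exact hSb0⟩
    refine ⟨hmem, ?_⟩
    have hval : valU Sb v p H (H.sup id + 1) = wU Sb v p H ♯ v ∅ := by
      unfold valU
      rw [hcL, hcR, if_pos ⟨hH, hSb0⟩]
    calc wU Sb v p H ≤ wU Sb v p H ♯ v ∅ := nadd_le_left' _ _
    _ = valU Sb v p H (H.sup id + 1) := hval.symm
    _ ≤ wU Sb v (p+1) H := valU_le Sb v p H _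
  intro q p hqp
  induction p with
  | zero =>
    intro H hH
    have : q = 0 := Nat.le_zero.1 hqp
    subst this
    exact ⟨hH, le_rfl⟩
  | succ p IHp =>
    intro H hH
    rcases Nat.lt_or_ge q (p+1) with hlt | hge
    · have h1 := IHp (by omega) H hH
      have h2 := step p H h1.1
      exact ⟨h2.1, h1.2.trans h2.2⟩
    · have : q = p+1 := by omega
      subst this
      exact ⟨hH, le_rfl⟩

end Pack
end ConvM

section Main

variable {S : Ordinal → Set (Finset ℕ)} {A : Ordinal → ℕ → Ordinal}

def PP (S : Ordinal → Set (Finset ℕ)) (α : Ordinal) : Prop :=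
  Hered (S α) ∧ ∅ ∈ S α ∧ (∀ n : ℕ, 1 ≤ n → ({n} : Finset ℕ) ∈ S α) ∧
  (∀ n : ℕ, ∅ ∈ derivFinsetTreeIter (Res (S α) n) (omega0 ^ α)) ∧
  (∃ v : Finset ℕ → Ordinal, (∀ F ∈ S α, ∀ G ∈ S α, F ⊂ G → v G < v F) ∧
    v ∅ ≤ omega0 ^ α ∧ (∀ F ∈ S α, F ≠ ∅ → v F < omega0 ^ α))

theorem zero_case (h0 : S 0 = {F | ∃ n : ℕ, 1 ≤ n ∧ F = {n}} ∪ {∅}) : PP S 0 := by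
  have hmem : ∀ n : ℕ, 1 ≤ n → ({n} : Finset ℕ) ∈ S 0 := by
    intro n hn; rw [h0]; exact Or.inl ⟨n, hn, rfl⟩
  have hSe : ∅ ∈ S 0 := by rw [h0]; exact Or.inr rfl
  refine ⟨?_, hSe, hmem, ?_, ?_⟩
  · intro F G hFG hG
    rw [h0] at hG ⊢
    rcases hG with ⟨n, hn, rfl⟩ | hG
    · rcases Finset.subset_singleton_iff.1 hFG with rfl | rfl
      · exact Or.inr rfl
      · exact Or.inl ⟨n, hn, rfl⟩
    · simp only [Set.mem_singleton_iff] at hG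
      subst hG
      have : F = ∅ := Finset.subset_empty.1 hFG
      exact Or.inr this
  · intro n
    rw [Ordinal.opow_zero]
    have h1 : (1 : Ordinal) = 0 + 1 := (zero_add 1).symm
    rw [h1, D_succ, D_zero]
    refine ⟨⟨hSe, by simp⟩, {max 1 n}, ⟨⟨?_, ?_⟩, ?_⟩⟩
    · rw [h0]; exact Or.inl ⟨max 1 n, le_max_left 1 n, rfl⟩
    · intro a ha
      rw [Finset.mem_singleton] at ha
      subst ha
      exact le_max_right 1 n
    · constructor
      · exact Finset.empty_subset _
      · intro hsub
        have := hsub (Finset.mem_singleton_self (max 1 n))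
        simp at this
  · classical
    refine ⟨fun F => if F = ∅ then 1 else 0, ?_, ?_, ?_⟩
    · intro F hF G hG hss
      rw [h0] at hG
      have hGne : G ≠ ∅ := by
        intro hGe
        subst hGe
        exact (Finset.not_ssubset_empty F) hss
      have hFe : F = ∅ := by
        rcases hG with ⟨n, _, rfl⟩ | hG
        · rcases Finset.subset_singleton_iff.1 hss.subset with rfl | rfl
          · rfl
          · exact absurd rfl hss.ne
        · simp only [Set.mem_singleton_iff] at hG
          exact absurd hG hGne
      dsimp only
      rw [if_pos hFe, if_neg hGne]
      exact zero_lt_one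
    · dsimp only
      rw [Ordinal.opow_zero, if_pos rfl]
    · intro F _ hne
      dsimp only
      rw [Ordinal.opow_zero, if_neg hne]
      exact zero_lt_one

section Succ

variable {β : Ordinal}

theorem succ_hered
    (hEq : S (β + 1) = {F | ∃ (k : ℕ) (Fs : Fin k → Finset ℕ),
      (∀ i, Fs i ∈ S β) ∧
      (∀ i j : Fin k, i < j → ∀ a ∈ Fs i, ∀ b ∈ Fs j, a < b) ∧
      (∀ i, ∀ a ∈ Fs i, k ≤ a) ∧
      F = Finset.univ.biUnion Fs})
    (hb : Hered (S β)) : Hered (S (β + 1)) := by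
  intro F G hFG hG
  rw [hEq] at hG ⊢
  obtain ⟨k, Fs, h1, h2, h3, rfl⟩ := hG
  refine ⟨k, fun i => Fs i ∩ F, fun i => hb Finset.inter_subset_left (h1 i), ?_, ?_, ?_⟩
  · intro i i' hii' a ha b hb'
    exact h2 i i' hii' a (Finset.mem_of_mem_inter_left ha) b (Finset.mem_of_mem_inter_left hb')
  · intro i a ha
    exact h3 i a (Finset.mem_of_mem_inter_left ha)
  · ext a
    simp only [Finset.mem_biUnion, Finset.mem_univ, true_and, Finset.mem_inter]
    constructor
    · intro ha
      have := hFG ha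
      rw [Finset.mem_biUnion] at this
      obtain ⟨i, _, hi⟩ := this
      exact ⟨i, hi, ha⟩
    · rintro ⟨i, _, ha⟩
      exact ha

theorem succ_mem_of_blocks
    (hEq : S (β + 1) = {F | ∃ (k : ℕ) (Fs : Fin k → Finset ℕ),
      (∀ i, Fs i ∈ S β) ∧
      (∀ i j : Fin k, i < j → ∀ a ∈ Fs i, ∀ b ∈ Fs j, a < b) ∧
      (∀ i, ∀ a ∈ Fs i, k ≤ a) ∧
      F = Finset.univ.biUnion Fs})
    (hb0 : ∅ ∈ S β) {k j : ℕ} (hjk : j ≤ k) (Fs : Fin j → Finset ℕ)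
    (h1 : ∀ i, Fs i ∈ S β)
    (h2 : ∀ i i' : Fin j, i < i' → ∀ a ∈ Fs i, ∀ b ∈ Fs i', a < b)
    (h3 : ∀ i, ∀ a ∈ Fs i, k ≤ a) :
    Finset.univ.biUnion Fs ∈ S (β + 1) := by
  classical
  rw [hEq]
  refine ⟨k, fun i => if h : (i : ℕ) < j then Fs ⟨i, h⟩ else ∅, ?_, ?_, ?_, ?_⟩
  · intro i
    by_cases h : (i : ℕ) < j
    · simp only [dif_pos h]; exact h1 _
    · simp only [dif_neg h]; exact hb0
  · intro i i' hii' a ha b hb'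
    by_cases h : (i : ℕ) < j
    · simp only [dif_pos h] at ha
      by_cases h' : (i' : ℕ) < j
      · simp only [dif_pos h'] at hb'
        exact h2 ⟨i, h⟩ ⟨i', h'⟩ (by exact_mod_cast hii') a ha b hb'
      · simp only [dif_neg h'] at hb'
        exact absurd hb' (Finset.notMem_empty b)
    · simp only [dif_neg h] at ha
      exact absurd ha (Finset.notMem_empty a)
  · intro i a ha
    by_cases h : (i : ℕ) < j
    · simp only [dif_pos h] at ha
      exact h3 _ a ha
    · simp only [dif_neg h] at ha
      exact absurd ha (Finset.notMem_empty a)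
  · ext a
    simp only [Finset.mem_biUnion, Finset.mem_univ, true_and]
    constructor
    · rintro ⟨i, hi⟩
      refine ⟨⟨(i : ℕ), lt_of_lt_of_le i.isLt hjk⟩, ?_⟩
      rw [dif_pos i.isLt]
      simpa using hi
    · rintro ⟨i, hi⟩
      by_cases h : (i : ℕ) < j
      · simp only [dif_pos h] at hi
        exact ⟨⟨i, h⟩, hi⟩
      · simp only [dif_neg h] at hi
        exact absurd hi (Finset.notMem_empty a)

theorem blocks_mem_UU (Sb : Set (Finset ℕ)) :
    ∀ (j : ℕ) (Fs : Fin j → Finset ℕ), (∀ i, Fs i ∈ Sb) →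
    (∀ i i' : Fin j, i < i' → ∀ a ∈ Fs i, ∀ b ∈ Fs i', a < b) →
    Finset.univ.biUnion Fs ∈ UU Sb j := by
  intro j
  induction j with
  | zero =>
    intro Fs _ _
    have : Finset.univ.biUnion Fs = ∅ := by
      simp
    rw [this]
    rfl
  | succ j IHj =>
    intro Fs h1 h2
    have hsplit : Finset.univ.biUnion Fs =
        (Finset.univ.biUnion (fun i : Fin j => Fs i.castSucc)) ∪ Fs (Fin.last j) := by
      ext a
      simp only [Finset.mem_biUnion, Finset.mem_univ, true_and, Finset.mem_union]
      constructor
      · rintro ⟨i, hi⟩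
        rcases eq_or_ne i (Fin.last j) with rfl | hne
        · exact Or.inr hi
        · exact Or.inl ⟨i.castPred hne, by rwa [Fin.castSucc_castPred]⟩
      · rintro (⟨i, hi⟩ | hi)
        · exact ⟨i.castSucc, hi⟩
        · exact ⟨Fin.last j, hi⟩
    rw [hsplit]
    apply conv_of_split
    · exact IHj _ (fun i => h1 _) (fun i i' hii' => h2 _ _ (by simpa using hii'))
    · exact h1 _
    · intro a ha b hb
      rw [Finset.mem_biUnion] at ha
      obtain ⟨i, _, hi⟩ := ha
      exact h2 i.castSucc (Fin.last j) (Fin.castSucc_lt_last i) a hi b hb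

theorem succ_LB_aux
    (hEq : S (β + 1) = {F | ∃ (k : ℕ) (Fs : Fin k → Finset ℕ),
      (∀ i, Fs i ∈ S β) ∧
      (∀ i j : Fin k, i < j → ∀ a ∈ Fs i, ∀ b ∈ Fs j, a < b) ∧
      (∀ i, ∀ a ∈ Fs i, k ≤ a) ∧
      F = Finset.univ.biUnion Fs})
    (hb0 : ∅ ∈ S β)
    (hbLB : ∀ n : ℕ, ∅ ∈ D (Res (S β) n) (omega0 ^ β)) :
    ∀ (m n k j : ℕ) (Fs : Fin j → Finset ℕ), j + m ≤ k →
      (∀ i, Fs i ∈ S β) →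
      (∀ i i' : Fin j, i < i' → ∀ a ∈ Fs i, ∀ b ∈ Fs i', a < b) →
      (∀ i, ∀ a ∈ Fs i, k ≤ a) → (∀ i, ∀ a ∈ Fs i, n ≤ a) →
      Finset.univ.biUnion Fs ∈ D (Res (S (β + 1)) n) (omega0 ^ β * m) := by
  classical
  intro m
  induction m with
  | zero =>
    intro n k j Fs hjk h1 h2 h3 h5
    rw [Nat.cast_zero, mul_zero, D_zero]
    refine ⟨succ_mem_of_blocks hEq hb0 (by omega) Fs h1 h2 h3, ?_⟩
    intro a ha
    rw [Finset.mem_biUnion] at ha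
    obtain ⟨i, _, hi⟩ := ha
    exact h5 i a hi
  | succ m IHm =>
    intro n k j Fs hjk h1 h2 h3 h5
    set F := Finset.univ.biUnion Fs with hF
    set N := max (max k n) (F.sup id + 1) with hN
    have hFmem : ∀ a ∈ F, a ≤ F.sup id := fun a ha => Finset.le_sup (f := id) ha
    have himg : ∀ G ∈ Res (S β) N, F ∪ G ∈ D (Res (S (β + 1)) n) (omega0 ^ β * m) := by
      rintro G ⟨hG, hGN⟩
      have hunion : F ∪ G = Finset.univ.biUnion
          (fun i : Fin (j+1) => if h : (i : ℕ) < j then Fs ⟨i, h⟩ else G) := by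
        ext a
        simp only [Finset.mem_union, Finset.mem_biUnion, Finset.mem_univ, true_and]
        constructor
        · rintro (ha | ha)
          · rw [hF, Finset.mem_biUnion] at ha
            obtain ⟨i, _, hi⟩ := ha
            refine ⟨⟨(i : ℕ), by omega⟩, ?_⟩
            simp only [dif_pos i.isLt]
            simpa using hi
          · refine ⟨⟨j, by omega⟩, ?_⟩
            simp only [dif_neg (lt_irrefl j)]
            exact ha
        · rintro ⟨i, hi⟩
          by_cases h : (i : ℕ) < j
          · simp only [dif_pos h] at hi
            refine Or.inl ?_
            rw [hF, Finset.mem_biUnion]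
            exact ⟨⟨i, h⟩, Finset.mem_univ _, hi⟩
          · simp only [dif_neg h] at hi
            exact Or.inr hi
      rw [hunion]
      apply IHm n k (j+1) _ (by omega)
      · intro i
        by_cases h : (i : ℕ) < j
        · simp only [dif_pos h]; exact h1 _
        · simp only [dif_neg h]; exact hG
      · intro i i' hii' a ha b hb'
        have hii : (i : ℕ) < (i' : ℕ) := hii'
        have hi'le : (i' : ℕ) < j + 1 := i'.isLt
        by_cases h : (i : ℕ) < j
        · simp only [dif_pos h] at ha
          by_cases h' : (i' : ℕ) < j
          · simp only [dif_pos h'] at hb'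
            exact h2 ⟨i, h⟩ ⟨i', h'⟩ (by exact_mod_cast hii') a ha b hb'
          · simp only [dif_neg h'] at hb'
            have haF : a ∈ F := by
              rw [hF, Finset.mem_biUnion]; exact ⟨⟨i, h⟩, Finset.mem_univ _, ha⟩
            have h6 := hFmem a haF
            have h7 := hGN b hb'
            omega
        · exact absurd (by omega : (i : ℕ) < j) h
      · intro i a ha
        by_cases h : (i : ℕ) < j
        · simp only [dif_pos h] at ha; exact h3 _ a ha
        · simp only [dif_neg h] at ha
          have := hGN a ha
          omega
      · intro i a ha
        by_cases h : (i : ℕ) < j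
        · simp only [dif_pos h] at ha; exact h5 _ a ha
        · simp only [dif_neg h] at ha
          have := hGN a ha
          omega
    have hdisj : ∀ G ∈ Res (S β) N, Disjoint F G := by
      rintro G ⟨_, hGN⟩
      rw [Finset.disjoint_left]
      intro a haF haG
      have := hFmem a haF
      have := hGN a haG
      omega
    have himg2 : F ∈ (fun G => F ∪ G) '' (D (Res (S β) N) (omega0 ^ β)) :=
      ⟨∅, hbLB N, Finset.union_empty F⟩
    rw [← D_image_union F _ hdisj] at himg2
    have hsub : ((fun G => F ∪ G) '' (Res (S β) N)) ⊆
        D (Res (S (β + 1)) n) (omega0 ^ β * m) := by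
      rintro _ ⟨G, hG, rfl⟩
      exact himg G hG
    have hfin := D_mono hsub (omega0 ^ β) himg2
    rw [← D_add] at hfin
    have hcast : omega0 ^ β * ((m+1 : ℕ) : Ordinal) = omega0 ^ β * m + omega0 ^ β := by
      rw [Nat.cast_succ, mul_add_one]
    rw [hcast]
    exact hfin

theorem succ_LB
    (hEq : S (β + 1) = {F | ∃ (k : ℕ) (Fs : Fin k → Finset ℕ),
      (∀ i, Fs i ∈ S β) ∧
      (∀ i j : Fin k, i < j → ∀ a ∈ Fs i, ∀ b ∈ Fs j, a < b) ∧
      (∀ i, ∀ a ∈ Fs i, k ≤ a) ∧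
      F = Finset.univ.biUnion Fs})
    (hb0 : ∅ ∈ S β)
    (hbLB : ∀ n : ℕ, ∅ ∈ D (Res (S β) n) (omega0 ^ β)) :
    ∀ n : ℕ, ∅ ∈ D (Res (S (β + 1)) n) (omega0 ^ (β + 1)) := by
  intro n
  have hne : β + 1 ≠ 0 := by
    rw [Ordinal.add_one_eq_succ]
    exact (Order.succ_ne_bot β)
  have hlim : Order.IsSuccLimit (omega0 ^ (β + 1)) :=
    Ordinal.isSuccLimit_opow_left Ordinal.isSuccLimit_omega0 hne
  rw [D_limit _ hlim]
  refine Set.mem_iInter.2 fun γ => Set.mem_iInter.2 fun hγ => ?_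
  have hγ' : γ < omega0 ^ β * omega0 := by
    rwa [Ordinal.add_one_eq_succ, Ordinal.opow_succ] at hγ
  obtain ⟨c, hc, hγc⟩ := (Ordinal.lt_mul_iff_of_isSuccLimit Ordinal.isSuccLimit_omega0).1 hγ'
  obtain ⟨mn, rfl⟩ := Ordinal.lt_omega0.1 hc
  have h0 := succ_LB_aux hEq hb0 hbLB mn n mn 0 (fun i => i.elim0)
    (by omega) (fun i => i.elim0) (fun i => i.elim0) (fun i => i.elim0) (fun i => i.elim0)
  have hempty : Finset.univ.biUnion (fun i : Fin 0 => i.elim0 : Fin 0 → Finset ℕ) = ∅ := by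
    simp
  rw [hempty] at h0
  exact D_antitone _ hγc.le h0

theorem succ_UB
    (hEq : S (β + 1) = {F | ∃ (k : ℕ) (Fs : Fin k → Finset ℕ),
      (∀ i, Fs i ∈ S β) ∧
      (∀ i j : Fin k, i < j → ∀ a ∈ Fs i, ∀ b ∈ Fs j, a < b) ∧
      (∀ i, ∀ a ∈ Fs i, k ≤ a) ∧
      F = Finset.univ.biUnion Fs})
    (hbH : Hered (S β)) (hb0 : ∅ ∈ S β)
    (v : Finset ℕ → Ordinal)
    (hv : ∀ F ∈ S β, ∀ G ∈ S β, F ⊂ G → v G < v F)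
    (hv0 : v ∅ ≤ omega0 ^ β) (hvne : ∀ F ∈ S β, F ≠ ∅ → v F < omega0 ^ β) :
    ∃ vS : Finset ℕ → Ordinal,
      (∀ F ∈ S (β+1), ∀ G ∈ S (β+1), F ⊂ G → vS G < vS F) ∧
      vS ∅ ≤ omega0 ^ (β + 1) ∧
      (∀ F ∈ S (β+1), F ≠ ∅ → vS F < omega0 ^ (β + 1)) := by
  classical
  have hpack := UU_pack (Sb := S β) (β := β) (v := v) hbH hb0 hv hv0 hvne
  have hmono : ∀ {q p : ℕ}, q ≤ p → ∀ H ∈ UU (S β) q,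
      H ∈ UU (S β) p ∧ wU (S β) v q H ≤ wU (S β) v p H := fun hqp => UU_mono hb0 hqp
  have hdec : ∀ H ∈ S (β + 1), ∀ hne : H.Nonempty, H ∈ UU (S β) (H.min' hne) := by
    intro H hH hne
    rw [hEq] at hH
    obtain ⟨k, Fs, h1, h2, h3, rfl⟩ := hH
    have hk : k ≤ (Finset.univ.biUnion Fs).min' hne := by
      have hmem := Finset.min'_mem (Finset.univ.biUnion Fs) hne
      rw [Finset.mem_biUnion] at hmem
      obtain ⟨i, _, hi⟩ := hmem
      exact h3 i _ hi
    exact (hmono hk _ (blocks_mem_UU _ k Fs h1 h2)).1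
  have hwlt : ∀ (p : ℕ), omega0 ^ β * (p : Ordinal) < omega0 ^ (β + 1) := by
    intro p
    rw [Ordinal.add_one_eq_succ, Ordinal.opow_succ]
    exact mul_lt_mul_of_pos_left (Ordinal.nat_lt_omega0 p)
      (Ordinal.opow_pos β Ordinal.omega0_pos)
  refine ⟨fun H => if h : H.Nonempty then wU (S β) v (H.min' h) H else omega0 ^ (β + 1),
    ?_, ?_, ?_⟩
  · intro F hF G hG hss
    rcases F.eq_empty_or_nonempty with rfl | hFne
    · have hGne : G.Nonempty := by
        rw [Finset.nonempty_iff_ne_empty]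
        intro hGe
        subst hGe
        exact (Finset.not_ssubset_empty ∅) hss
      dsimp only
      rw [dif_neg (by simp : ¬ (∅ : Finset ℕ).Nonempty), dif_pos hGne]
      calc wU (S β) v (G.min' hGne) G ≤ omega0 ^ β * (G.min' hGne : ℕ) :=
            (hpack (G.min' hGne)).2.2.2.1 G (hdec G hG hGne)
      _ < omega0 ^ (β + 1) := hwlt _
    · have hGne : G.Nonempty := hFne.mono hss.subset
      dsimp only
      rw [dif_pos hFne, dif_pos hGne]
      have hqp : G.min' hGne ≤ F.min' hFne :=
        Finset.min'_le G _ (hss.subset (F.min'_mem hFne))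
      have hGq := hdec G hG hGne
      have hFq : F ∈ UU (S β) (G.min' hGne) := (hpack (G.min' hGne)).1 hss.subset hGq
      have h1 : wU (S β) v (G.min' hGne) G < wU (S β) v (G.min' hGne) F :=
        (hpack (G.min' hGne)).2.2.1 F hFq G hGq hss
      exact h1.trans_le (hmono hqp F hFq).2
  · dsimp only
    rw [dif_neg (by simp : ¬ (∅ : Finset ℕ).Nonempty)]
  · intro F hF hne
    have hFne : F.Nonempty := Finset.nonempty_iff_ne_empty.2 hne
    dsimp only
    rw [dif_pos hFne]
    calc wU (S β) v (F.min' hFne) F ≤ omega0 ^ β * (F.min' hFne : ℕ) :=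
          (hpack (F.min' hFne)).2.2.2.1 F (hdec F hF hFne)
    _ < omega0 ^ (β + 1) := hwlt _

theorem succ_case
    (hEq : S (β + 1) = {F | ∃ (k : ℕ) (Fs : Fin k → Finset ℕ),
      (∀ i, Fs i ∈ S β) ∧
      (∀ i j : Fin k, i < j → ∀ a ∈ Fs i, ∀ b ∈ Fs j, a < b) ∧
      (∀ i, ∀ a ∈ Fs i, k ≤ a) ∧
      F = Finset.univ.biUnion Fs})
    (hP : PP S β) : PP S (β + 1) := by
  obtain ⟨hbH, hb0, hbs, hbLB, v, hv, hv0, hvne⟩ := hP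
  refine ⟨succ_hered hEq hbH, ?_, ?_, succ_LB hEq hb0 hbLB, succ_UB hEq hbH hb0 v hv hv0 hvne⟩
  · have h := succ_mem_of_blocks hEq hb0 (le_refl 0) (fun i : Fin 0 => i.elim0)
      (fun i => i.elim0) (fun i => i.elim0) (fun i => i.elim0)
    have hempty : Finset.univ.biUnion (fun i : Fin 0 => i.elim0 : Fin 0 → Finset ℕ) = ∅ := by
      simp
    rwa [hempty] at h
  · intro n hn
    have h := succ_mem_of_blocks hEq hb0 (le_refl 1) (fun _ : Fin 1 => ({n} : Finset ℕ))
      (fun _ => hbs n hn) ?_ ?_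
    · have hempty : Finset.univ.biUnion (fun _ : Fin 1 => ({n} : Finset ℕ)) = {n} := by
        simp
      rwa [hempty] at h
    · intro i i' hii'
      have h1 : (i : ℕ) < (i' : ℕ) := hii'
      have h2 := i.isLt
      have h3 := i'.isLt
      omega
    · intro i a ha
      rw [Finset.mem_singleton] at ha
      omega

end Succ

section Limit

variable {α : Ordinal}

theorem limit_case (hl : Order.IsSuccLimit α)
    (hA1 : StrictMono (A α)) (hA2 : ∀ n : ℕ, A α n < α)
    (hA3 : ∀ β < α, ∃ n : ℕ, β ≤ A α n)
    (hEq : S α = {F | ∃ n : ℕ, F ∈ S (A α n) ∧ ∀ a ∈ F, n ≤ a})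
    (IH : ∀ m : ℕ, PP S (A α m)) : PP S α := by
  classical
  have hered : Hered (S α) := by
    intro F G hFG hG
    rw [hEq] at hG ⊢
    obtain ⟨n, hn1, hn2⟩ := hG
    exact ⟨n, (IH n).1 hFG hn1, fun a ha => hn2 a (hFG ha)⟩
  have hαne : α ≠ 0 := hl.pos.ne'
  have hopowlim : Order.IsSuccLimit (omega0 ^ α) :=
    Ordinal.isSuccLimit_opow_left Ordinal.isSuccLimit_omega0 hαne
  refine ⟨hered, ?_, ?_, ?_, ?_⟩
  · rw [hEq]
    exact ⟨0, (IH 0).2.1, by simp⟩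
  · intro n hn
    rw [hEq]
    exact ⟨0, (IH 0).2.2.1 n hn, by simp⟩
  · -- lower bound
    intro n
    rw [D_limit _ hopowlim]
    refine Set.mem_iInter.2 fun γ => Set.mem_iInter.2 fun hγ => ?_
    obtain ⟨β', hβ', hγβ⟩ := (Ordinal.lt_opow_of_isSuccLimit Ordinal.omega0_ne_zero hl).1 hγ
    obtain ⟨i, hi⟩ := hA3 β' hβ'
    have h1 := (IH i).2.2.2.1 (max n i)
    have hsub : Res (S (A α i)) (max n i) ⊆ Res (S α) n := by
      rintro F ⟨hF, hFm⟩
      refine ⟨?_, fun a ha => le_trans (le_max_left n i) (hFm a ha)⟩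
      rw [hEq]
      exact ⟨i, hF, fun a ha => le_trans (le_max_right n i) (hFm a ha)⟩
    have h2 := D_mono hsub _ h1
    have hle : γ ≤ omega0 ^ (A α i) :=
      le_trans hγβ.le (Ordinal.opow_le_opow_right Ordinal.omega0_pos hi)
    exact D_antitone _ hle h2
  · -- upper bound
    have hvm := fun m : ℕ => (IH m).2.2.2.2
    choose v hv1 hv2 hv3 using hvm
    set v' : ℕ → Finset ℕ → Ordinal :=
      fun m F => if F ∈ S (A α m) then v m F else 0 with hv'def
    set NS : ℕ → Finset ℕ → Ordinal :=
      fun n F => Nat.rec 0 (fun m acc => acc ♯ v' m F) n with hNSdef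
    have hNSsucc : ∀ (nn : ℕ) (F), NS (nn+1) F = NS nn F ♯ v' nn F := fun _ _ => rfl
    have hNSzero : ∀ F, NS 0 F = 0 := fun _ => rfl
    have NS_le : ∀ (F : Finset ℕ) (e : Ordinal) (nn : ℕ),
        (∀ m < nn, v' m F ≤ omega0 ^ e) → NS nn F ≤ omega0 ^ e * nn := by
      intro F e nn
      induction nn with
      | zero => intro _; rw [hNSzero]; simp
      | succ nn IHn =>
        intro hcoord
        rw [hNSsucc]
        exact opow_mul_nadd_le nn (IHn (fun m hm => hcoord m (by omega)))
          (hcoord nn (by omega))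
    have NS_mono : ∀ (F G : Finset ℕ) (nn : ℕ),
        (∀ m < nn, v' m G ≤ v' m F) → NS nn G ≤ NS nn F := by
      intro F G nn
      induction nn with
      | zero => intro _; rw [hNSzero, hNSzero]
      | succ nn IHn =>
        intro hcoord
        rw [hNSsucc, hNSsucc]
        calc NS nn G ♯ v' nn G ≤ NS nn G ♯ v' nn F :=
              Ordinal.nadd_le_nadd_left (hcoord nn (by omega)) _
        _ ≤ NS nn F ♯ v' nn F :=
              Ordinal.nadd_le_nadd_right (IHn (fun m hm => hcoord m (by omega))) _
    have NS_strict : ∀ (F G : Finset ℕ) (nn : ℕ),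
        (∀ m < nn, v' m G ≤ v' m F) → (∃ m₀, m₀ < nn ∧ v' m₀ G < v' m₀ F) →
        NS nn G < NS nn F := by
      intro F G nn
      induction nn with
      | zero =>
        rintro _ ⟨m₀, hm₀, _⟩
        omega
      | succ nn IHn =>
        rintro hcoord ⟨m₀, hm₀, hstr⟩
        rw [hNSsucc, hNSsucc]
        rcases Nat.lt_or_ge m₀ nn with hlt | hge
        · calc NS nn G ♯ v' nn G ≤ NS nn G ♯ v' nn F :=
                Ordinal.nadd_le_nadd_left (hcoord nn (by omega)) _
          _ < NS nn F ♯ v' nn F :=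
                Ordinal.nadd_lt_nadd_right
                  (IHn (fun m hm => hcoord m (by omega)) ⟨m₀, hlt, hstr⟩) _
        · have hm0 : m₀ = nn := by omega
          subst hm0
          calc NS m₀ G ♯ v' m₀ G < NS m₀ G ♯ v' m₀ F :=
                Ordinal.nadd_lt_nadd_left hstr _
          _ ≤ NS m₀ F ♯ v' m₀ F :=
                Ordinal.nadd_le_nadd_right
                  (NS_mono F G m₀ (fun m hm => hcoord m (by omega))) _
    have NS_mono_n : ∀ (F : Finset ℕ) (n1 n2 : ℕ), n1 ≤ n2 → NS n1 F ≤ NS n2 F := by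
      intro F n1 n2 h
      induction n2 with
      | zero =>
        have : n1 = 0 := by omega
        subst this; exact le_rfl
      | succ n2 IHn =>
        rcases Nat.lt_or_ge n1 (n2+1) with hlt | hge
        · exact (IHn (by omega)).trans (by rw [hNSsucc]; exact nadd_le_left' _ _)
        · have : n1 = n2 + 1 := by omega
          subst this; exact le_rfl
    have hbound : ∀ F ∈ S α, F ≠ ∅ →
        ∀ hFne : F.Nonempty, NS (F.min' hFne + 1) F < omega0 ^ α := by
      intro F hF hne hFne
      set p := F.min' hFne with hp
      have hcoord : ∀ m < p + 1, v' m F ≤ omega0 ^ (A α p) := by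
        intro m hm
        rw [hv'def]
        dsimp only
        by_cases hmem : F ∈ S (A α m)
        · rw [if_pos hmem]
          refine le_trans (hv3 m F hmem hne).le ?_
          exact Ordinal.opow_le_opow_right Ordinal.omega0_pos
            (hA1.monotone (by omega))
        · rw [if_neg hmem]
          exact zero_le
      calc NS (p+1) F ≤ omega0 ^ (A α p) * (p+1 : ℕ) := NS_le F _ _ hcoord
      _ < omega0 ^ (A α p) * omega0 :=
            mul_lt_mul_of_pos_left (Ordinal.nat_lt_omega0 _)
              (Ordinal.opow_pos _ Ordinal.omega0_pos)
      _ = omega0 ^ (A α p + 1) := by rw [Ordinal.add_one_eq_succ, Ordinal.opow_succ]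
      _ ≤ omega0 ^ α := by
            apply Ordinal.opow_le_opow_right Ordinal.omega0_pos
            rw [Ordinal.add_one_eq_succ]
            exact (hl.succ_lt (hA2 p)).le
    refine ⟨fun F => if h : F.Nonempty then NS (F.min' h + 1) F else omega0 ^ α,
      ?_, ?_, ?_⟩
    · intro F hF G hG hss
      rcases F.eq_empty_or_nonempty with rfl | hFne
      · have hGne : G.Nonempty := by
          rw [Finset.nonempty_iff_ne_empty]
          intro hGe; subst hGe
          exact (Finset.not_ssubset_empty ∅) hss
        dsimp only
        rw [dif_neg (by simp : ¬ (∅ : Finset ℕ).Nonempty), dif_pos hGne]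
        exact hbound G hG (Finset.nonempty_iff_ne_empty.1 hGne) hGne
      · have hGne : G.Nonempty := hFne.mono hss.subset
        dsimp only
        rw [dif_pos hFne, dif_pos hGne]
        set q := G.min' hGne with hq
        set p := F.min' hFne with hpp
        have hqp : q ≤ p := Finset.min'_le G _ (hss.subset (F.min'_mem hFne))
        have hcoord : ∀ m < q + 1, v' m G ≤ v' m F := by
          intro m _
          rw [hv'def]
          dsimp only
          by_cases hmem : G ∈ S (A α m)
          · have hFmem : F ∈ S (A α m) := (IH m).1 hss.subset hmem
            rw [if_pos hmem, if_pos hFmem]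
            exact (hv1 m F hFmem G hmem hss).le
          · rw [if_neg hmem]
            exact zero_le
        have hex : ∃ m₀, m₀ < q + 1 ∧ v' m₀ G < v' m₀ F := by
          have hGmem := hG
          rw [hEq] at hGmem
          obtain ⟨m₀, hm1, hm2⟩ := hGmem
          have hm₀q : m₀ ≤ q := hm2 _ (G.min'_mem hGne)
          have hFmem : F ∈ S (A α m₀) := (IH m₀).1 hss.subset hm1
          refine ⟨m₀, by omega, ?_⟩
          rw [hv'def]
          dsimp only
          rw [if_pos hm1, if_pos hFmem]
          exact hv1 m₀ F hFmem G hm1 hss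
        calc NS (q+1) G < NS (q+1) F := NS_strict F G (q+1) hcoord hex
        _ ≤ NS (p+1) F := NS_mono_n F (q+1) (p+1) (by omega)
    · dsimp only
      rw [dif_neg (by simp : ¬ (∅ : Finset ℕ).Nonempty)]
    · intro F hF hne
      have hFne : F.Nonempty := Finset.nonempty_iff_ne_empty.2 hne
      dsimp only
      rw [dif_pos hFne]
      exact hbound F hF hne hFne

end Limit

theorem main_induction (hS : SchreierSystem S A) :
    ∀ α : Ordinal, α < omega1 → PP S α := by
  intro α
  induction α using Ordinal.induction with
  | _ α IH =>
    intro hα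
    rcases Ordinal.zero_or_succ_or_isSuccLimit α with rfl | ⟨β, rfl⟩ | hl
    · exact zero_case hS.1
    · rw [← Ordinal.add_one_eq_succ]
      rw [← Ordinal.add_one_eq_succ] at hα
      have hβ : β < β + 1 := by
        rw [Ordinal.add_one_eq_succ]; exact Order.lt_succ β
      exact succ_case (hS.2.2.1 β hα) (IH β hβ (hβ.trans hα))
    · obtain ⟨hA1, hA2, hA3, hEq⟩ := hS.2.2.2 α hα hl
      exact limit_case hl hA1 hA2 hA3 hEq
        (fun m => IH (A α m) (hA2 m) ((hA2 m).trans hα))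

end Main

end SchreierProof

/-- The order of the tree `Tree(S_α) = (S_α, ⊆)` of Schreier sets is `ω^α + 1`. -/
theorem order_tree_schreier
    (S : Ordinal → Set (Finset ℕ)) (A : Ordinal → ℕ → Ordinal)
    (h : SchreierSystem S A) :
    ∀ α < omega1, finsetTreeOrder (S α) = Ordinal.omega0 ^ α + 1 := by
  intro α hα
  obtain ⟨hH, hEm, hsing, hLB, v, hv, hv0, hvne⟩ :=
    SchreierProof.main_induction h α hα
  have hLB0 : ∅ ∈ derivFinsetTreeIter (S α) (Ordinal.omega0 ^ α) := by
    have := hLB 0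
    rwa [SchreierProof.Res_zero] at this
  have hUB : derivFinsetTreeIter (S α) (Ordinal.omega0 ^ α) = {∅} := by
    apply Set.Subset.antisymm
    · intro F hF
      rcases eq_or_ne F ∅ with rfl | hne
      · rfl
      · exfalso
        have h1 := SchreierProof.le_weight v hv (Ordinal.omega0 ^ α) F hF
        have h2 := hvne F (SchreierProof.D_subset _ _ hF) hne
        exact absurd h1 (not_le.2 h2)
    · intro F hF
      rw [Set.mem_singleton_iff] at hF
      subst hF
      exact hLB0
  have hsucc : derivFinsetTreeIter (S α) (Ordinal.omega0 ^ α + 1) = ∅ := by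
    rw [SchreierProof.D_succ, hUB]
    ext F
    simp only [Set.mem_empty_iff_false, iff_false]
    rintro ⟨hF1, G, hG, hss⟩
    rw [Set.mem_singleton_iff] at hF1 hG
    subst hF1; subst hG
    exact (Finset.not_ssubset_empty ∅) hss
  apply le_antisymm
  · exact csInf_le' hsucc
  · show Ordinal.omega0 ^ α + 1 ≤ sInf {o : Ordinal | derivFinsetTreeIter (S α) o = ∅}
    refine le_csInf ⟨Ordinal.omega0 ^ α + 1, hsucc⟩ fun b hb => ?_
    by_contra hcon
    push_neg at hcon
    have hble : b ≤ Ordinal.omega0 ^ α := by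
      rw [Ordinal.add_one_eq_succ] at hcon
      exact Order.lt_succ_iff.1 hcon
    have : ∅ ∈ derivFinsetTreeIter (S α) b :=
      SchreierProof.D_antitone _ hble hLB0
    rw [hb] at this
    exact this
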